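/- Let E0 and R0 be dual Dyck sequences and let worsert(E0,R0) = (R,F). Then both R and F are dual Dyck sequences. -/

import Mathlib

/-- A finite integer sequence is a *dual Dyck sequence* if each entry is at
least the previous entry plus 2. The empty sequence is allowed. -/
def DualDyck (x : List ℤ) : Prop := List.Chain' (fun a b => a + 2 ≤ b) x

/-- Length of the maximal `-2`-chain starting at the first position (used on
reversed lists to measure maximal `+2`-chains ending at a given position). -/
def chainDown : List ℤ → ℕ
  | [] => 0
  | [_] => 1
  | a :: b :: t => if b = a - 2 then chainDown (b :: t) + 1 else 1

/-- Index of the *last* entry of `R` satisfying `p`. -/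
def findIdxFromRight? (p : ℤ → Bool) (R : List ℤ) : Option ℕ :=
  match R.reverse.findIdx? p with
  | none => none
  | some k => some (R.length - 1 - k)

/-- One step of reverse row insertion on the state `(E, R, F)` with `E`
nonempty; `b` denotes the final entry of `E`.  The result is the new state. -/
def worsertStep (E R F : List ℤ) : List ℤ × List ℤ × List ℤ :=
  let b := E.getLastD 0
  match findIdxFromRight? (fun r => decide (r - 1 ≤ b)) R with
  | none => (E.dropLast, b :: R, F)                              -- Case 0
  | some i =>
    let ri := R.getD i 0
    if ri ≤ b then (E.dropLast, R.set i b, ri :: F)              -- Case 1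
    else
      let j := chainDown ((R.take (i + 1)).reverse)
      let k := chainDown E.reverse
      if j ≤ k then                                              -- Case 2
        (E.take (E.length - j),
         R.take (i + 1 - j) ++ E.drop (E.length - j) ++ R.drop (i + 1),
         (R.take (i + 1)).drop (i + 1 - j) ++ F)
      else                                                       -- Case 3
        (E.take (E.length - k), R, E.drop (E.length - k) ++ F)

/-- Fuel-indexed run of reverse row insertion on the state `(E, R, F)`.
Each step consumes at least one entry of `E`, so fuel `E.length` suffices. -/
def worsertAux : ℕ → List ℤ → List ℤ → List ℤ → List ℤ × List ℤ
  | 0, _, R, F => (R, F)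
  | fuel + 1, E, R, F =>
      if E = [] then (R, F)
      else
        let s := worsertStep E R F
        worsertAux fuel s.1 s.2.1 s.2.2

/-- Reverse row insertion `worsert(E₀, R₀) = (R, F)`. -/
def worsert (E0 R0 : List ℤ) : List ℤ × List ℤ :=
  worsertAux E0.length E0 R0 []

def DownC : List ℤ → Prop := List.Chain' (fun a b => b = a - 2)

lemma chainDown_spec : ∀ (L : List ℤ), L ≠ [] →
    ∃ C T, L = C ++ T ∧ C.length = chainDown L ∧ C ≠ [] ∧ DownC C ∧
      ∀ c ∈ C.getLast?, ∀ t ∈ T.head?, t ≠ c - 2 := by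
  intro L
  induction L using chainDown.induct with
  | case1 => intro h; exact absurd rfl h
  | case2 a => intro _; exact ⟨[a], [], by simp [chainDown, DownC, List.Chain']⟩
  | case3 a t ih =>
    intro _
    obtain ⟨C, T, hsplit, hlen, hC, hdc, hmax⟩ := ih (by simp)
    obtain ⟨c0, C', rfl⟩ := List.exists_cons_of_ne_nil hC
    have hc0 : c0 = a - 2 := by
      have := congrArg List.head? hsplit; simpa using this.symm
    subst hc0
    refine ⟨a :: (a - 2) :: C', T, by simpa using hsplit, ?_, by simp, ?_, ?_⟩
    · simp only [chainDown, if_pos rfl, ← hlen]; simp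
    · exact List.isChain_cons_cons.2 ⟨rfl, hdc⟩
    · intro c hc t ht
      exact hmax c (by simpa using hc) t ht
  | case4 a b t hb =>
    intro _
    refine ⟨[a], b :: t, by simp, by simp [chainDown, hb], by simp, by simp [DownC, List.Chain'], ?_⟩
    intro c hc u hu
    simp at hc hu; omega

lemma downC_getLast : ∀ (L : List ℤ) (c : ℤ), DownC (c :: L) →
    (c :: L).getLast? = some (c - 2 * L.length) := by
  intro L
  induction L with
  | nil => intro c _; simp
  | cons d L ih =>
    intro c h
    rw [DownC, List.Chain', List.isChain_cons_cons] at h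
    have := ih d h.2
    rw [List.getLast?_cons_cons, this]
    congr 1
    have h1 := h.1
    simp only [List.length_cons]
    push_cast
    omega

lemma downC_le_mem : ∀ (C : List ℤ), DownC C → ∀ x, C.getLast? = some x →
    ∀ a ∈ C, x ≤ a := by
  intro C
  induction C with
  | nil => simp
  | cons c L ih =>
    intro h x hx a ha
    cases L with
    | nil => simp at hx ha; omega
    | cons d L' =>
      rw [DownC, List.Chain', List.isChain_cons_cons] at h
      rw [List.getLast?_cons_cons] at hx
      rcases List.mem_cons.1 ha with rfl | ha
      · have := ih h.2 x hx d (by simp); omega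
      · exact ih h.2 x hx a ha

lemma dyck_mem_le : ∀ (L : List ℤ), DualDyck L → ∀ x, L.getLast? = some x →
    ∀ a ∈ L, a ≤ x := by
  intro L
  induction L with
  | nil => simp
  | cons c L ih =>
    intro h x hx a ha
    cases L with
    | nil => simp at hx ha; omega
    | cons d L' =>
      rw [DualDyck, List.Chain', List.isChain_cons_cons] at h
      rw [List.getLast?_cons_cons] at hx
      rcases List.mem_cons.1 ha with rfl | ha
      · have := ih h.2 x hx d (by simp); omega
      · exact ih h.2 x hx a ha

lemma downC_getElem : ∀ (L : List ℤ) (c : ℤ), DownC (c :: L) →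
    ∀ n, n ≤ L.length → (c :: L)[n]? = some (c - 2 * n) := by
  intro L
  induction L with
  | nil =>
    intro c _ n hn
    simp only [List.length_nil, Nat.le_zero] at hn; subst hn; simp
  | cons d L ih =>
    intro c h n hn
    rw [DownC, List.Chain', List.isChain_cons_cons] at h
    cases n with
    | zero => simp
    | succ m =>
      have := ih d h.2 m (by simpa using hn)
      rw [List.getElem?_cons_succ, this]
      congr 1
      have h1 := h.1
      push_cast
      omega

lemma downC_reverse_dyck (C : List ℤ) (h : DownC C) : DualDyck C.reverse := by
  rw [DualDyck, List.Chain', List.isChain_reverse]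
  exact h.imp (fun a b hab => by omega)

lemma findIdx?_spec (p : ℤ → Bool) : ∀ (L : List ℤ) (k : ℕ), L.findIdx? p = some k →
    ∃ A x B, L = A ++ x :: B ∧ A.length = k ∧ p x = true ∧ ∀ a ∈ A, p a = false := by
  intro L
  induction L with
  | nil => intro k h; simp at h
  | cons a l ih =>
    intro k h
    rw [List.findIdx?_cons] at h
    by_cases hpa : p a = true
    · rw [if_pos hpa] at h
      have hk0 : k = 0 := by simpa using h.symm
      exact ⟨[], a, l, by simp, by simp [hk0], hpa, by simp⟩
    · rw [if_neg hpa] at h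
      rcases Option.map_eq_some_iff.1 h with ⟨k', hk', rfl⟩
      obtain ⟨A, x, B, rfl, rfl, hpx, hA⟩ := ih k' hk'
      exact ⟨a :: A, x, B, by simp, by simp, hpx, by
        intro y hy
        rcases List.mem_cons.1 hy with rfl | hy
        · simpa using hpa
        · exact hA y hy⟩

lemma fifr_some (p : ℤ → Bool) (R : List ℤ) (i : ℕ) (h : findIdxFromRight? p R = some i) :
    ∃ P x S, R = P ++ x :: S ∧ P.length = i ∧ p x = true ∧ ∀ s ∈ S, p s = false := by
  unfold findIdxFromRight? at h
  rcases hk : R.reverse.findIdx? p with _ | k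
  · rw [hk] at h; simp at h
  · rw [hk] at h
    simp only [Option.some.injEq] at h
    obtain ⟨A, x, B, hrev, hlen, hpx, hA⟩ := findIdx?_spec p _ _ hk
    have hR : R = B.reverse ++ x :: A.reverse := by
      rw [← List.reverse_reverse R, hrev]
      simp
    have hRL : R.length = A.length + 1 + B.length := by
      rw [← List.length_reverse (as := R), hrev]; simp; omega
    refine ⟨B.reverse, x, A.reverse, hR, ?_, hpx, ?_⟩
    · simp; omega
    · intro s hs; exact hA s (by simpa using hs)

lemma fifr_none (p : ℤ → Bool) (R : List ℤ) (h : findIdxFromRight? p R = none) :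
    ∀ r ∈ R, p r = false := by
  unfold findIdxFromRight? at h
  rcases hk : R.reverse.findIdx? p with _ | k
  · intro r hr
    exact List.findIdx?_eq_none_iff.1 hk r (by simpa using hr)
  · rw [hk] at h; simp at h

lemma getD_mid (P S : List ℤ) (x : ℤ) : (P ++ x :: S).getD P.length 0 = x := by
  rw [List.getD_eq_getElem?_getD, List.getElem?_append_right (le_refl _)]
  simp

lemma set_mid (P S : List ℤ) (x b : ℤ) : (P ++ x :: S).set P.length b = P ++ b :: S := by
  rw [List.set_append, if_neg (by omega)]
  simp

lemma take_mid (P S : List ℤ) (x : ℤ) : (P ++ x :: S).take (P.length + 1) = P ++ [x] := by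
  have : P ++ x :: S = (P ++ [x]) ++ S := by simp
  rw [this, List.take_left' (by simp)]

lemma drop_mid (P S : List ℤ) (x : ℤ) : (P ++ x :: S).drop (P.length + 1) = S := by
  have : P ++ x :: S = (P ++ [x]) ++ S := by simp
  rw [this, List.drop_left' (by simp)]

def WInv (E R F : List ℤ) : Prop :=
  ∀ b ∈ E.getLast?, ∀ f ∈ F.head?, ∀ r ∈ R, r ≤ b + 1 → r + 2 ≤ f

lemma step_spec (E R F : List ℤ) (hE : E ≠ []) (dE : DualDyck E) (dR : DualDyck R)
    (dF : DualDyck F) (inv : WInv E R F) :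
    (worsertStep E R F).1.length < E.length ∧ DualDyck (worsertStep E R F).1 ∧
      DualDyck (worsertStep E R F).2.1 ∧ DualDyck (worsertStep E R F).2.2 ∧
      WInv (worsertStep E R F).1 (worsertStep E R F).2.1 (worsertStep E R F).2.2 := by
  have hb : E.getLastD 0 = E.getLast hE := (List.getLastD_eq_getLast? (a := 0) (l := E)) ▸ by
    rw [List.getLast?_eq_getLast hE]; rfl
  set b := E.getLastD 0 with hbdef
  have hbE : E.getLast? = some b := by rw [List.getLast?_eq_getLast hE, hb]
  have hE2 : E.dropLast ++ [b] = E := by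
    rw [hb]; exact List.dropLast_append_getLast hE
  have dE' : DualDyck (E.dropLast ++ [b]) := by rw [hE2]; exact dE
  have hbound := (List.isChain_append.1 dE').2.2
  rcases hfind : findIdxFromRight? (fun r => decide (r - 1 ≤ b)) R with _ | i
  · -- Case 0
    have hnone := fifr_none _ _ hfind
    have hRge : ∀ r ∈ R, b + 2 ≤ r := by
      intro r hr
      have := hnone r hr
      simp at this; omega
    simp only [worsertStep, ← hbdef, hfind]
    refine ⟨?_, ?_, ?_, dF, ?_⟩
    · rw [List.length_dropLast]
      have := List.length_pos_iff.2 hE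
      omega
    · exact dE.prefix (List.dropLast_prefix E)
    · rw [DualDyck, List.Chain', List.isChain_cons]
      exact ⟨fun y hy => hRge y (List.mem_of_mem_head? hy), dR⟩
    · intro b' hb' f hf r hr hrle
      have hb'b : b' + 2 ≤ b := hbound b' hb' b (by simp)
      rcases List.mem_cons.1 hr with rfl | hr
      · omega
      · have := hRge r hr; omega
  · obtain ⟨P, x, S, hR, hP, hpx, hS⟩ := fifr_some _ _ _ hfind
    have hri : R.getD i 0 = x := by rw [hR, ← hP, getD_mid]
    by_cases hxb : x ≤ b
    · -- Case 1
      have hxb1 : x - 1 ≤ b := by simpa using hpx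
      have hSge : ∀ s ∈ S, b + 2 ≤ s := by
        intro s hs; have := hS s hs; simp at this; omega
      have hxmem : x ∈ R := by rw [hR]; simp
      have dRsplit := List.isChain_append.1 (hR ▸ dR)
      have dP : DualDyck P := dRsplit.1
      have dxS : DualDyck (x :: S) := dRsplit.2.1
      have hPx : ∀ y ∈ P.getLast?, y + 2 ≤ x := by
        intro y hy; exact dRsplit.2.2 y hy x (by simp)
      have hset : R.set i b = P ++ b :: S := by rw [hR, ← hP, set_mid]
      simp only [worsertStep, ← hbdef, hfind, hri, if_pos hxb, hset]
      refine ⟨?_, ?_, ?_, ?_, ?_⟩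
      · rw [List.length_dropLast]
        have := List.length_pos_iff.2 hE
        omega
      · exact dE.prefix (List.dropLast_prefix E)
      · rw [DualDyck, List.Chain', List.isChain_append]
        refine ⟨dP, ?_, ?_⟩
        · rw [List.isChain_cons]
          exact ⟨fun y hy => hSge y (List.mem_of_mem_head? hy), dxS.tail⟩
        · intro y hy z hz
          simp at hz
          have := hPx y hy; omega
      · rw [DualDyck, List.Chain', List.isChain_cons]
        refine ⟨?_, dF⟩
        intro f hf
        exact inv b hbE f hf x hxmem (by omega)
      · intro b' hb' f hf r hr hrle
        have hb'b : b' + 2 ≤ b := hbound b' hb' b (by simp)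
        simp only [List.head?_cons, Option.mem_def, Option.some.injEq] at hf
        subst hf
        rcases List.mem_append.1 hr with hrP | hrS
        · rcases hPl : P.getLast? with _ | y
          · rw [List.getLast?_eq_none_iff] at hPl; subst hPl; simp at hrP
          · have h1 := dyck_mem_le P dP y hPl r hrP
            have h2 := hPx y (by rw [hPl]; rfl)
            omega
        · rcases List.mem_cons.1 hrS with rfl | hrS2
          · omega
          · have := hSge r hrS2; omega
    · -- Cases 2/3
      have hx1 : x = b + 1 := by simp at hpx; omega
      have hSge : ∀ s ∈ S, b + 2 ≤ s := by
        intro s hs; have := hS s hs; simp at this; omega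
      have hxmem : x ∈ R := by rw [hR]; simp
      have hxf : ∀ f ∈ F.head?, x + 2 ≤ f := fun f hf => inv b hbE f hf x hxmem (by omega)
      -- E decomposition
      obtain ⟨CE, TE, hErev, hkE, hCEne, hdcE, hmaxE⟩ :=
        chainDown_spec E.reverse (by simpa using hE)
      obtain ⟨b0, CE', rfl⟩ := List.exists_cons_of_ne_nil hCEne
      have hb0 : b = b0 := by
        have h1 : E.reverse.head? = some b0 := by rw [hErev]; simp
        rw [List.head?_reverse, hbE] at h1
        simpa using h1
      subst hb0
      have hEeq : E = TE.reverse ++ (b :: CE').reverse := by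
        rw [← List.reverse_reverse E, hErev, List.reverse_append]
      have lenE : E.length = TE.length + (CE'.length + 1) := by
        rw [hEeq]; simp only [List.length_append, List.length_reverse, List.length_cons]
      -- R decomposition
      have htake : R.take (i + 1) = P ++ [x] := by rw [hR, ← hP, take_mid]
      have hdropS : R.drop (i + 1) = S := by rw [hR, ← hP, drop_mid]
      obtain ⟨CR, TR, hPrev, hjR, hCRne, hdcR, hmaxR⟩ :=
        chainDown_spec (P ++ [x]).reverse (by simp)
      obtain ⟨x0, CR', rfl⟩ := List.exists_cons_of_ne_nil hCRne
      have hx0 : x = x0 := by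
        have h1 : (P ++ [x]).reverse.head? = some x0 := by rw [hPrev]; simp
        rw [List.head?_reverse, List.getLast?_concat] at h1
        simpa using h1
      subst hx0
      have hPxeq : P ++ [x] = TR.reverse ++ (x :: CR').reverse := by
        rw [← List.reverse_reverse (P ++ [x]), hPrev, List.reverse_append]
      have lenPx : i + 1 = TR.length + (CR'.length + 1) := by
        have := congrArg List.length hPxeq
        simp at this; omega
      -- values
      have lastCR : (x :: CR').getLast? = some (x - 2 * CR'.length) := downC_getLast CR' x hdcR
      have lastCE : (b :: CE').getLast? = some (b - 2 * CE'.length) := downC_getLast CE' b hdcE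
      have hklen : chainDown E.reverse = CE'.length + 1 := by rw [← hkE]; simp
      have hjlen : chainDown ((P ++ [x]).reverse) = CR'.length + 1 := by rw [← hjR]; simp
      -- boundaries
      have dPx : DualDyck (P ++ [x]) := (hR ▸ dR).prefix ⟨S, by simp⟩
      have dTRCR : DualDyck (TR.reverse ++ (x :: CR').reverse) := hPxeq ▸ dPx
      have dTECE : DualDyck (TE.reverse ++ (b :: CE').reverse) := hEeq ▸ dE
      have dRs : DualDyck (P ++ x :: S) := hR ▸ dR
      have dS : DualDyck S := by
        have h1 : DualDyck (x :: S) := (List.isChain_append.1 dRs).2.1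
        exact h1.tail
      have hTRbound : ∀ t ∈ TR.head?, t + 3 ≤ x - 2 * CR'.length := by
        intro t ht
        have hb2 := (List.isChain_append.1 dTRCR).2.2 t
          (by rw [List.getLast?_reverse]; exact ht) (x - 2 * CR'.length)
          (by rw [List.head?_reverse]; exact lastCR)
        have hne := hmaxR (x - 2 * CR'.length) lastCR t ht
        omega
      have hTEbound : ∀ t ∈ TE.head?, t + 3 ≤ b - 2 * CE'.length := by
        intro t ht
        have hb2 := (List.isChain_append.1 dTECE).2.2 t
          (by rw [List.getLast?_reverse]; exact ht) (b - 2 * CE'.length)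
          (by rw [List.head?_reverse]; exact lastCE)
        have hne := hmaxE (b - 2 * CE'.length) lastCE t ht
        omega
      have dCRrev : DualDyck ((x :: CR').reverse) := downC_reverse_dyck _ hdcR
      have dCErev : DualDyck ((b :: CE').reverse) := downC_reverse_dyck _ hdcE
      simp only [worsertStep, ← hbdef, hfind, hri, if_neg hxb, htake, hdropS, hjlen, hklen]
      by_cases hjk : CR'.length + 1 ≤ CE'.length + 1
      · -- Case 2
        rw [if_pos hjk]
        have hjk' : CR'.length ≤ CE'.length := by omega
        set G : List ℤ := b :: CE'.take CR'.length with hGdef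
        set H : List ℤ := CE'.drop CR'.length with hHdef
        have hGH : b :: CE' = G ++ H := by
          rw [hGdef, hHdef]; simp
        have hGlen : G.length = CR'.length + 1 := by
          rw [hGdef]; simp; omega
        have dcG : DownC G := hdcE.prefix (by rw [hGH]; exact List.prefix_append _ _)
        have lastG : G.getLast? = some (b - 2 * CR'.length) := by
          have := downC_getLast (CE'.take CR'.length) b dcG
          rw [this]; congr 2
          rw [List.length_take]
          congr 1; omega
        have hEsplit : E = (TE.reverse ++ H.reverse) ++ G.reverse := by
          rw [hEeq, hGH, List.reverse_append]; simp
        have hHlen : H.length = CE'.length - CR'.length := by rw [hHdef]; simp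
        have hlenTH : (TE.reverse ++ H.reverse).length =
            (TE.reverse ++ H.reverse ++ G.reverse).length - (CR'.length + 1) := by
          simp only [List.length_append, List.length_reverse]
          omega
        have hE'eq : E.take (E.length - (CR'.length + 1)) = TE.reverse ++ H.reverse := by
          conv_lhs => rw [hEsplit]
          exact List.take_left' hlenTH
        have hEdrop : E.drop (E.length - (CR'.length + 1)) = G.reverse := by
          conv_lhs => rw [hEsplit]
          exact List.drop_left' hlenTH
        have hlenTR : TR.reverse.length = i + 1 - (CR'.length + 1) := by
          simp; omega
        have hRtake : R.take (i + 1 - (CR'.length + 1)) = TR.reverse := by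
          have h1 : R.take (i + 1 - (CR'.length + 1)) =
              (R.take (i + 1)).take (i + 1 - (CR'.length + 1)) := by
            rw [List.take_take]; congr 1; omega
          rw [h1, htake, hPxeq]
          exact List.take_left' hlenTR
        have hFpre : (P ++ [x]).drop (i + 1 - (CR'.length + 1)) = (x :: CR').reverse := by
          rw [hPxeq]
          exact List.drop_left' hlenTR
        rw [hE'eq, hEdrop, hRtake, hFpre]
        have hfval : ((x :: CR').reverse ++ F).head? = some (x - 2 * CR'.length) := by
          rw [List.head?_append_of_ne_nil _ (by simp), List.head?_reverse]
          exact lastCR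
        refine ⟨?_, ?_, ?_, ?_, ?_⟩
        · rw [← hE'eq, List.length_take]
          omega
        · rw [← hE'eq]; exact dE.prefix (List.take_prefix _ _)
        · rw [DualDyck, List.Chain', List.isChain_append]
          refine ⟨?_, dS, ?_⟩
          · rw [List.isChain_append]
            refine ⟨dTRCR.prefix (List.prefix_append _ _), downC_reverse_dyck _ dcG, ?_⟩
            intro y hy z hz
            rw [List.getLast?_reverse] at hy
            rw [List.head?_reverse, lastG] at hz
            have := hTRbound y hy
            simp at hz
            omega
          · intro y hy z hz
            rw [List.getLast?_append_of_ne_nil _ (by simp),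
              List.getLast?_reverse, hGdef] at hy
            simp at hy
            have := hSge z (List.mem_of_mem_head? hz)
            omega
        · rw [DualDyck, List.Chain', List.isChain_append]
          refine ⟨dCRrev, dF, ?_⟩
          intro y hy f hf
          rw [List.getLast?_reverse] at hy
          simp at hy
          have := hxf f hf
          omega
        · intro b' hb' f hf r hr hrle
          rw [hfval] at hf
          simp only [Option.mem_def, Option.some.injEq] at hf
          subst hf
          -- bound b'
          have hb'le : b' ≤ b - 2 * (CR'.length + 1) := by
            rcases Nat.lt_or_ge CR'.length CE'.length with hlt | hge
            · have hHne : H ≠ [] := by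
                rw [hHdef, ← List.length_pos_iff, List.length_drop]; omega
              rw [List.getLast?_append_of_ne_nil _ (by simpa using hHne),
                List.getLast?_reverse, hHdef] at hb'
              have hdh : (CE'.drop CR'.length).head? = (b :: CE')[CR'.length + 1]? := by
                rw [List.head?_drop, List.getElem?_cons_succ]
              rw [hdh, downC_getElem CE' b hdcE (CR'.length + 1) (by omega)] at hb'
              simp at hb'
              push_cast at hb' ⊢
              omega
            · have hHnil : H = [] := by
                rw [hHdef, List.drop_eq_nil_iff]; omega
              have hEQ : CR'.length = CE'.length := by omega
              rw [hHnil] at hb'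
              simp only [List.reverse_nil, List.append_nil, List.getLast?_reverse] at hb'
              have := hTEbound b' hb'
              push_cast
              omega
          push_cast at hrle hb'le ⊢
          omega
      · -- Case 3
        rw [if_neg hjk]
        have hlen3 : TE.reverse.length =
            (TE.reverse ++ (b :: CE').reverse).length - (CE'.length + 1) := by
          simp only [List.length_append, List.length_reverse, List.length_cons]
          omega
        have hE'3 : E.take (E.length - (CE'.length + 1)) = TE.reverse := by
          conv_lhs => rw [hEeq]
          exact List.take_left' hlen3
        have hEdrop3 : E.drop (E.length - (CE'.length + 1)) = (b :: CE').reverse := by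
          conv_lhs => rw [hEeq]
          exact List.drop_left' hlen3
        rw [hE'3, hEdrop3]
        refine ⟨?_, ?_, dR, ?_, ?_⟩
        · rw [← hE'3, List.length_take]
          omega
        · rw [← hE'3]; exact dE.prefix (List.take_prefix _ _)
        · rw [DualDyck, List.Chain', List.isChain_append]
          refine ⟨dCErev, dF, ?_⟩
          intro y hy f hf
          rw [List.getLast?_reverse] at hy
          simp at hy
          have := hxf f hf
          omega
        · intro b' hb' f hf r hr hrle
          rw [List.getLast?_reverse] at hb'
          have hB := hTEbound b' hb'
          rw [List.head?_append_of_ne_nil _ (by simp), List.head?_reverse, lastCE] at hf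
          simp only [Option.mem_def, Option.some.injEq] at hf
          subst hf
          omega

lemma worsertAux_spec : ∀ (fuel : ℕ) (E R F : List ℤ), E.length ≤ fuel →
    DualDyck E → DualDyck R → DualDyck F → WInv E R F →
    DualDyck (worsertAux fuel E R F).1 ∧ DualDyck (worsertAux fuel E R F).2 := by
  intro fuel
  induction fuel with
  | zero => intro E R F _ _ dR dF _; exact ⟨dR, dF⟩
  | succ n ih =>
    intro E R F hlen dE dR dF inv
    by_cases hE : E = []
    · rw [worsertAux, if_pos hE]; exact ⟨dR, dF⟩
    · rw [worsertAux, if_neg hE]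
      obtain ⟨hlt, d1, d2, d3, inv'⟩ := step_spec E R F hE dE dR dF inv
      exact ih _ _ _ (by omega) d1 d2 d3 inv'

/-- **Reverse row insertion preserves dual Dyck sequences.**  If `E₀` and `R₀`
are dual Dyck sequences and `worsert(E₀, R₀) = (R, F)`, then both `R` and `F`
are dual Dyck sequences. -/
theorem worsert_dualDyck (E0 R0 R F : List ℤ)
    (hE0 : DualDyck E0) (hR0 : DualDyck R0)
    (h : worsert E0 R0 = (R, F)) :
    DualDyck R ∧ DualDyck F := by
  have h0 := worsertAux_spec E0.length E0 R0 [] (le_refl _) hE0 hR0 (by exact List.isChain_nil)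
    (by intro b hb f hf; simp at hf)
  rw [worsert] at h
  rw [h] at h0
  exact h0
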